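/- Let v(t) = (V sin(w₀t), V sin(w₀t + 2π/3), V sin(w₀t − 2π/3)) with V > 0 (balanced negative-sequence voltage). Then ω_vec(t) = −(w₀/√3)·(1,1,1) and ρ(t) = 0 for all t. -/

import Mathlib

open scoped InnerProductSpace

noncomputable def cross3 (a b : EuclideanSpace ℝ (Fin 3)) : EuclideanSpace ℝ (Fin 3) :=
  WithLp.toLp 2 ![a 1 * b 2 - a 2 * b 1, a 2 * b 0 - a 0 * b 2, a 0 * b 1 - a 1 * b 0]

lemma cos23 : Real.cos (2 * Real.pi / 3) = -(1/2) := by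
  have h : 2 * Real.pi / 3 = Real.pi - Real.pi / 3 := by ring
  rw [h, Real.cos_pi_sub, Real.cos_pi_div_three]

lemma sin23 : Real.sin (2 * Real.pi / 3) = Real.sqrt 3 / 2 := by
  have h : 2 * Real.pi / 3 = Real.pi - Real.pi / 3 := by ring
  rw [h, Real.sin_pi_sub, Real.sin_pi_div_three]

lemma hd_aux (V w₀ φ t : ℝ) :
    HasDerivAt (fun t => V * Real.sin (w₀ * t + φ)) (V * w₀ * Real.cos (w₀ * t + φ)) t := by
  have h1 : HasDerivAt (fun t : ℝ => w₀ * t + φ) w₀ t := by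
    simpa using ((hasDerivAt_id t).const_mul w₀).add_const φ
  have h2 := (Real.hasDerivAt_sin (w₀ * t + φ)).comp t h1
  simpa [mul_comm, mul_assoc, mul_left_comm] using h2.const_mul V

theorem negative_sequence_invariants (V w₀ : ℝ) (hV : 0 < V)
    (v : ℝ → EuclideanSpace ℝ (Fin 3))
    (hv : v = fun t => (WithLp.toLp 2 ![V * Real.sin (w₀ * t), V * Real.sin (w₀ * t + 2 * Real.pi / 3),
      V * Real.sin (w₀ * t - 2 * Real.pi / 3)] : EuclideanSpace ℝ (Fin 3))) (t : ℝ) :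
    (‖v t‖ ^ 2)⁻¹ • cross3 (v t) (deriv v t) =
      (-(w₀ / Real.sqrt 3)) • (WithLp.toLp 2 (![1, 1, 1] : Fin 3 → ℝ) : EuclideanSpace ℝ (Fin 3)) ∧
    ⟪v t, deriv v t⟫_ℝ / ‖v t‖ ^ 2 = 0 := by
  set s := Real.sin (w₀ * t) with hs
  set c := Real.cos (w₀ * t) with hc
  have hsc : s ^ 2 + c ^ 2 = 1 := Real.sin_sq_add_cos_sq _
  have h3 : Real.sqrt 3 * Real.sqrt 3 = 3 := Real.mul_self_sqrt (by norm_num)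
  have h3pos : (0:ℝ) < Real.sqrt 3 := Real.sqrt_pos.mpr (by norm_num)
  have hsp : Real.sin (w₀ * t + 2 * Real.pi / 3) = -(s/2) + c * (Real.sqrt 3 / 2) := by
    rw [Real.sin_add, cos23, sin23]; ring
  have hsm : Real.sin (w₀ * t - 2 * Real.pi / 3) = -(s/2) - c * (Real.sqrt 3 / 2) := by
    rw [Real.sin_sub, cos23, sin23]; ring
  have hcp : Real.cos (w₀ * t + 2 * Real.pi / 3) = -(c/2) - s * (Real.sqrt 3 / 2) := by
    rw [Real.cos_add, cos23, sin23]; ring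
  have hcm : Real.cos (w₀ * t - 2 * Real.pi / 3) = -(c/2) + s * (Real.sqrt 3 / 2) := by
    rw [Real.cos_sub, cos23, sin23]; ring
  have hder : HasDerivAt v
      (WithLp.toLp 2 ![V * w₀ * Real.cos (w₀ * t), V * w₀ * Real.cos (w₀ * t + 2 * Real.pi / 3),
        V * w₀ * Real.cos (w₀ * t - 2 * Real.pi / 3)] : EuclideanSpace ℝ (Fin 3)) t := by
    rw [hv]
    have hg : HasDerivAt (fun t => (![V * Real.sin (w₀ * t),
        V * Real.sin (w₀ * t + 2 * Real.pi / 3),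
        V * Real.sin (w₀ * t - 2 * Real.pi / 3)] : Fin 3 → ℝ))
        (![V * w₀ * Real.cos (w₀ * t), V * w₀ * Real.cos (w₀ * t + 2 * Real.pi / 3),
          V * w₀ * Real.cos (w₀ * t - 2 * Real.pi / 3)] : Fin 3 → ℝ) t := by
      rw [hasDerivAt_pi]
      intro i
      fin_cases i
      · simpa using hd_aux V w₀ 0 t
      · simpa using hd_aux V w₀ (2 * Real.pi / 3) t
      · simpa [sub_eq_add_neg] using hd_aux V w₀ (-(2 * Real.pi / 3)) t
    exact ((EuclideanSpace.equiv (Fin 3) ℝ).symm.toContinuousLinearMap.hasFDerivAt.comp_hasDerivAt t hg)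
  have hderiv := hder.deriv
  -- component values
  have h0 : v t 0 = V * s := by rw [hv]; simp [hs]
  have h1 : v t 1 = V * (-(s/2) + c * (Real.sqrt 3 / 2)) := by rw [hv]; simp [hsp]
  have h2 : v t 2 = V * (-(s/2) - c * (Real.sqrt 3 / 2)) := by rw [hv]; simp [hsm]
  have hd0 : deriv v t 0 = V * w₀ * c := by rw [hderiv]; simp [hc]
  have hd1 : deriv v t 1 = V * w₀ * (-(c/2) - s * (Real.sqrt 3 / 2)) := by
    rw [hderiv]; simp [hcp]
  have hd2 : deriv v t 2 = V * w₀ * (-(c/2) + s * (Real.sqrt 3 / 2)) := by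
    rw [hderiv]; simp [hcm]
  have hnorm : ‖v t‖ ^ 2 = 3 * V ^ 2 / 2 := by
    rw [← real_inner_self_eq_norm_sq, PiLp.inner_apply]
    simp only [RCLike.inner_apply, conj_trivial, Fin.sum_univ_three, h0, h1, h2]
    linear_combination (V ^ 2 * c ^ 2 / 2) * h3 + (3 * V ^ 2 / 2) * hsc
  have hw : -(w₀ / Real.sqrt 3) = -(Real.sqrt 3 * w₀ / 3) := by
    rw [neg_inj, div_eq_div_iff h3pos.ne' (by norm_num : (3:ℝ) ≠ 0)]
    linear_combination (-w₀) * h3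
  have hne : (3 * V ^ 2 / 2 : ℝ) ≠ 0 := by positivity
  constructor
  · ext i
    fin_cases i
    · show (‖v t‖ ^ 2)⁻¹ * (v t 1 * deriv v t 2 - v t 2 * deriv v t 1) = -(w₀ / Real.sqrt 3) * 1
      rw [hnorm, h1, h2, hd1, hd2, mul_one, hw, inv_mul_eq_div, div_eq_iff hne]
      linear_combination (-(Real.sqrt 3 / 2) * V ^ 2 * w₀) * hsc
    · show (‖v t‖ ^ 2)⁻¹ * (v t 2 * deriv v t 0 - v t 0 * deriv v t 2) = -(w₀ / Real.sqrt 3) * 1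
      rw [hnorm, h0, h2, hd0, hd2, mul_one, hw, inv_mul_eq_div, div_eq_iff hne]
      linear_combination (-(Real.sqrt 3 / 2) * V ^ 2 * w₀) * hsc
    · show (‖v t‖ ^ 2)⁻¹ * (v t 0 * deriv v t 1 - v t 1 * deriv v t 0) = -(w₀ / Real.sqrt 3) * 1
      rw [hnorm, h0, h1, hd0, hd1, mul_one, hw, inv_mul_eq_div, div_eq_iff hne]
      linear_combination (-(Real.sqrt 3 / 2) * V ^ 2 * w₀) * hsc
  · rw [PiLp.inner_apply]
    simp only [RCLike.inner_apply, conj_trivial, Fin.sum_univ_three,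
      h0, h1, h2, hd0, hd1, hd2]
    rw [div_eq_zero_iff]
    left
    linear_combination (-(V ^ 2 * s * c * w₀) / 2) * h3
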